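/- Let n, u, c be natural numbers, e := u + c, and let N0 : Matrix (Fin e) (Fin u) ℝ, h : Matrix (Fin u) (Fin e) ℝ and C0 : Matrix (Fin c) (Fin e) ℝ satisfy h * N0 = 1, C0 * N0 = 0, and suppose C0 has trivial left kernel (for every y : Fin c → ℝ, y ᵥ* C0 = 0 implies y = 0). Then the square matrix obtained by stacking h on top of C0 (the matrix Matrix.fromRows h C0, reindexed along Fin u ⊕ Fin c ≃ Fin e) is invertible, and there exists hΓ : Matrix (Fin e) (Fin c) ℝ such that C0 * hΓ = 1, h * hΓ = 0, and N0 * h + hΓ * C0 = 1 (the e × e identity); in other words, the inverse of the stacked matrix is the matrix with column blocks N0 and hΓ. -/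

import Mathlib

open Matrix

/-- The reduction `h` and the time component `C0` of the Geroch fields stack into an
invertible matrix, whose inverse has column blocks `N0` and `hΓ`. -/
theorem stmt_0 (n u c : ℕ)
    (N0 : Matrix (Fin (u + c)) (Fin u) ℝ)
    (h : Matrix (Fin u) (Fin (u + c)) ℝ)
    (C0 : Matrix (Fin c) (Fin (u + c)) ℝ)
    (hhN : h * N0 = 1)
    (hCN : C0 * N0 = 0)
    (hker : ∀ y : Fin c → ℝ, y ᵥ* C0 = 0 → y = 0) :
    IsUnit (Matrix.reindex finSumFinEquiv (Equiv.refl (Fin (u + c)))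
      (Matrix.fromRows h C0)) ∧
    ∃ hΓ : Matrix (Fin (u + c)) (Fin c) ℝ,
      C0 * hΓ = 1 ∧ h * hΓ = 0 ∧ N0 * h + hΓ * C0 = 1 ∧
      (Matrix.reindex finSumFinEquiv (Equiv.refl (Fin (u + c))) (Matrix.fromRows h C0)) *
        (Matrix.reindex (Equiv.refl (Fin (u + c))) finSumFinEquiv
          (Matrix.fromCols N0 hΓ)) = 1 := by
  set E : Fin u ⊕ Fin c ≃ Fin (u + c) := finSumFinEquiv with hE
  set M : Matrix (Fin u ⊕ Fin c) (Fin (u + c)) ℝ := Matrix.fromRows h C0 with hM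
  set M' : Matrix (Fin (u + c)) (Fin (u + c)) ℝ :=
    Matrix.reindex E (Equiv.refl (Fin (u + c))) M with hM'
  -- trivial left kernel of M'
  have hkerM' : ∀ w : Fin (u + c) → ℝ, w ᵥ* M' = 0 → w = 0 := by
    intro w hw
    have hw' : (w ∘ ⇑E) ᵥ* M = 0 := by
      have : w ᵥ* M' = ((w ∘ ⇑(E.symm).symm) ᵥ* M) ∘ id := by
        rw [hM', Matrix.reindex_apply, Matrix.submatrix_vecMul_equiv]
        rfl
      simpa [this] using hw
    have hsplit : (w ∘ ⇑E ∘ Sum.inl) ᵥ* h + (w ∘ ⇑E ∘ Sum.inr) ᵥ* C0 = 0 := by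
      have : Sum.elim (w ∘ ⇑E ∘ Sum.inl) (w ∘ ⇑E ∘ Sum.inr) ᵥ* Matrix.fromRows h C0 = 0 := by
        have he : Sum.elim (w ∘ ⇑E ∘ Sum.inl) (w ∘ ⇑E ∘ Sum.inr) = w ∘ ⇑E := by
          funext s; cases s <;> rfl
        rw [he]; exact hw'
      rwa [Matrix.sumElim_vecMul_fromRows] at this
    have h1 : (w ∘ ⇑E ∘ Sum.inl) = 0 := by
      have := congrArg (fun v => v ᵥ* N0) hsplit
      simpa [Matrix.add_vecMul, Matrix.vecMul_vecMul, hhN, hCN, Matrix.vecMul_one] using this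
    have h2 : (w ∘ ⇑E ∘ Sum.inr) = 0 := by
      apply hker
      have := congrFun (congrArg (fun v => v ᵥ* h) h1) -- dummy
      rw [h1] at hsplit
      simpa using hsplit
    funext i
    have := congrFun (by
      have : ∀ s : Fin u ⊕ Fin c, w (E s) = 0 := by
        rintro (a | b)
        · exact congrFun h1 a
        · exact congrFun h2 b
      exact funext this : (fun s => w (E s)) = fun _ => 0) (E.symm i)
    simpa using this
  have hMunit : IsUnit M' := by
    rw [← Matrix.vecMul_injective_iff_isUnit]
    intro x y hxy
    have hxy' : x ᵥ* M' = y ᵥ* M' := hxy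
    have : (x - y) ᵥ* M' = 0 := by
      rw [Matrix.sub_vecMul, hxy', sub_self]
    have := hkerM' _ this
    exact sub_eq_zero.mp this
  have hdet : IsUnit M'.det := (Matrix.isUnit_iff_isUnit_det M').mp hMunit
  set B : Matrix (Fin (u + c)) (Fin (u + c)) ℝ := M'⁻¹ with hB
  have hBr : M' * B = 1 := Matrix.mul_nonsing_inv M' hdet
  have hBl : B * M' = 1 := Matrix.nonsing_inv_mul M' hdet
  have hMsub : M'.submatrix ⇑E id = M := by
    ext i j
    simp [hM', Matrix.reindex_apply]
  set C : Matrix (Fin (u + c)) (Fin u ⊕ Fin c) ℝ := B.submatrix id ⇑E with hC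
  have hMC : M * C = 1 := by
    have := Matrix.submatrix_mul_equiv M' B ⇑E (Equiv.refl (Fin (u + c))) ⇑E
    rw [hBr] at this
    have h1 : M'.submatrix ⇑E ⇑(Equiv.refl (Fin (u + c))) = M := hMsub
    rw [h1] at this
    rw [hC]
    rw [show B.submatrix (⇑(Equiv.refl (Fin (u+c)))) ⇑E = B.submatrix id ⇑E from rfl] at this
    rw [this, Matrix.submatrix_one_equiv]
  have hCM : C * M = 1 := by
    have := Matrix.submatrix_mul_equiv B M' id E id
    rw [hBl, hMsub] at this
    rw [hC, this, Matrix.submatrix_id_id]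
  -- block decomposition of C
  set N0' : Matrix (Fin (u + c)) (Fin u) ℝ := C.toCols₁ with hN0'def
  set hG : Matrix (Fin (u + c)) (Fin c) ℝ := C.toCols₂ with hGdef
  have hCcols : Matrix.fromCols N0' hG = C := by
    rw [hN0'def, hGdef]; exact Matrix.fromCols_toCols C
  have hblocks : Matrix.fromBlocks (h * N0') (h * hG) (C0 * N0') (C0 * hG) =
      Matrix.fromBlocks (1 : Matrix (Fin u) (Fin u) ℝ) 0 0 (1 : Matrix (Fin c) (Fin c) ℝ) := by
    rw [← Matrix.fromRows_mul_fromCols, hCcols, ← hM, hMC, Matrix.fromBlocks_one]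
  obtain ⟨hb11, hb12, hb21, hb22⟩ := Matrix.fromBlocks_inj.mp hblocks
  have hsum : N0' * h + hG * C0 = 1 := by
    rw [← Matrix.fromCols_mul_fromRows, hCcols, ← hM, hCM]
  have hN0eq : N0' = N0 := by
    have := congrArg (fun X => X * N0) hsum
    simpa [Matrix.add_mul, Matrix.mul_assoc, hhN, hCN] using this
  refine ⟨hMunit, hG, hb22, hb12, by rw [← hN0eq]; exact hsum, ?_⟩
  have hCre : Matrix.reindex (Equiv.refl (Fin (u + c))) E C = B := by
    ext i j
    simp [hC, Matrix.reindex_apply]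
  rw [← hN0eq, hCcols, hCre]
  exact hBr
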